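/- Let a, b, c, d, e be nonzero integers and work in ℚ(T). Set D = T^6 + 2c T^5 + (c^2+2d) T^4 + (2cd+2e) T^3 + (2ce + d^2 + 4b) T^2 + 2deT + e^2, t₁ = -4abT/D, x = t₁ T, y = T and z = (-T^2 t₁^2 - aT t₁ + b)/(t₁ T). Then x ≠ 0, y ≠ 0, and z^2 = f(x)^2 + g(y)^2, where f(x) = x + a + b/x and g(y) = y^2 + cy + d + e/y; i.e., (x, y, z) is a solution in ℚ(T) of z^2 = f(x)^2 + g(y)^2. -/

import Mathlib

open Polynomial in
theorem stmt6 (a b c d e : ℤ) (ha : a ≠ 0) (hb : b ≠ 0) (hc : c ≠ 0)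
    (hd : d ≠ 0) (he : e ≠ 0) :
    let T : RatFunc ℚ := RatFunc.X
    let D : RatFunc ℚ := T ^ 6 + 2 * c * T ^ 5 + (c ^ 2 + 2 * d) * T ^ 4
      + (2 * c * d + 2 * e) * T ^ 3 + (2 * c * e + d ^ 2 + 4 * b) * T ^ 2
      + 2 * d * e * T + e ^ 2
    let t₁ : RatFunc ℚ := -4 * a * b * T / D
    let x : RatFunc ℚ := t₁ * T
    let y : RatFunc ℚ := T
    let z : RatFunc ℚ := (-T ^ 2 * t₁ ^ 2 - a * T * t₁ + b) / (t₁ * T)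
    x ≠ 0 ∧ y ≠ 0 ∧
      z ^ 2 = (x + a + b / x) ^ 2 + (y ^ 2 + c * y + d + e / y) ^ 2 := by
  intro T D t₁ x y z
  haveI : CharZero (RatFunc ℚ) :=
    charZero_of_injective_algebraMap (RatFunc.algebraMap_injective ℚ)
  have hT : T ≠ 0 := RatFunc.X_ne_zero
  -- D is nonzero, being the image of a nonzero polynomial
  set p : ℚ[X] := X ^ 6 + C ((2*c : ℤ) : ℚ) * X ^ 5 + C ((c^2+2*d : ℤ) : ℚ) * X ^ 4
    + C ((2*c*d+2*e : ℤ) : ℚ) * X ^ 3 + C ((2*c*e+d^2+4*b : ℤ) : ℚ) * X ^ 2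
    + C ((2*d*e : ℤ) : ℚ) * X + C ((e^2 : ℤ) : ℚ) with hpdef
  have h6 : p.coeff 6 = 1 := by
    rw [hpdef]
    simp only [coeff_add, coeff_C_mul, coeff_X_pow, coeff_C, coeff_X]
    norm_num
  have hp0 : p ≠ 0 := by intro h; rw [h] at h6; simp at h6
  have hmap : algebraMap ℚ[X] (RatFunc ℚ) p = D := by
    simp only [hpdef, map_add, map_mul, map_pow, RatFunc.algebraMap_C,
      RatFunc.algebraMap_X, map_intCast]
    push_cast
    ring
  have hD : D ≠ 0 := hmap ▸ RatFunc.algebraMap_ne_zero hp0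
  have ha' : (a : RatFunc ℚ) ≠ 0 := Int.cast_ne_zero.mpr ha
  have hb' : (b : RatFunc ℚ) ≠ 0 := Int.cast_ne_zero.mpr hb
  have ht₁ : t₁ ≠ 0 := by
    refine div_ne_zero ?_ hD
    exact mul_ne_zero (mul_ne_zero (mul_ne_zero (by norm_num) ha') hb') hT
  have hx : x ≠ 0 := mul_ne_zero ht₁ hT
  refine ⟨hx, hT, ?_⟩
  have hz : z = b / x - x - a := by
    show (-T ^ 2 * t₁ ^ 2 - a * T * t₁ + b) / (t₁ * T) = _
    rw [show x = t₁ * T from rfl]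
    rw [div_sub' hx, div_sub' hx]
    congr 1
    ring
  have hfx : -(4 * (a * b)) / x = D / T ^ 2 := by
    rw [show x = t₁ * T from rfl, show t₁ = -4 * a * b * T / D from rfl]
    rw [div_eq_div_iff (by exact mul_ne_zero ht₁ hT) (pow_ne_zero 2 hT)]
    field_simp
  have hg : (y ^ 2 + c * y + d + e / y) ^ 2 = D / T ^ 2 - 4 * b := by
    have hDeq : D = (T ^ 3 + c * T ^ 2 + d * T + e) ^ 2 + 4 * b * T ^ 2 := by
      show T ^ 6 + 2 * c * T ^ 5 + (c ^ 2 + 2 * d) * T ^ 4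
        + (2 * c * d + 2 * e) * T ^ 3 + (2 * c * e + d ^ 2 + 4 * b) * T ^ 2
        + 2 * d * e * T + e ^ 2 = _
      ring
    rw [show y = T from rfl, hDeq]
    field_simp
    ring
  have step : (b / x - x - (a : RatFunc ℚ)) ^ 2
      = (x + a + b / x) ^ 2 - 4 * b + -(4 * (a * b)) / x := by
    field_simp
    ring
  rw [hz, step, hfx]
  rw [hg]
  ring
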